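/- For a = 1, the matrix L_a = Diag(1,1,a,1,1) − A(P₅), where A(P₅) is the adjacency matrix of the path on 5 vertices, satisfies L_a·(1,1,0,−1,−1)ᵗ = 0ᵗ; hence det(Diag(1,1,a,1,1) − A(P₅)) = 0 for all positive integers a, yet (1,1,a,1,1) is not a d-arithmetical structure of A(P₅) for any a (so vanishing of the determinant does not characterize d-arithmetical structures). -/
import Mathlib


/-- The adjacency matrix of the path on 5 vertices. -/
def adjP5 : Matrix (Fin 5) (Fin 5) ℤ :=
  !![0, 1, 0, 0, 0;
     1, 0, 1, 0, 0;
     0, 1, 0, 1, 0;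
     0, 0, 1, 0, 1;
     0, 0, 0, 1, 0]

/-- `Diag(1,1,a,1,1) − A(P₅)` kills `(1,1,0,−1,−1)` (for `a = 1`),
its determinant vanishes for every positive integer `a`, yet `(1,1,a,1,1)` is never
a d-arithmetical structure of `A(P₅)`. -/
theorem stmt_14 :
    (Matrix.diagonal ![1, 1, (1 : ℤ), 1, 1] - adjP5).mulVec ![1, 1, 0, -1, -1] = 0 ∧
    (∀ a : ℤ, 0 < a → (Matrix.diagonal ![1, 1, a, 1, 1] - adjP5).det = 0) ∧
    (∀ a : ℤ, 0 < a → ¬ ∃ r : Fin 5 → ℤ, (∀ i, 0 < r i) ∧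
      (Matrix.diagonal ![1, 1, a, 1, 1] - adjP5).mulVec r = 0) := by
  refine ⟨?_, ?_, ?_⟩
  · funext i
    fin_cases i <;>
      simp [adjP5, Matrix.mulVec, dotProduct, Fin.sum_univ_five,
        Matrix.diagonal, Matrix.sub_apply]
  · intro a _
    rw [← Matrix.exists_mulVec_eq_zero_iff]
    refine ⟨![1, 1, 0, -1, -1], ?_, ?_⟩
    · intro h
      have := congrFun h 0
      simp at this
    · funext i
      fin_cases i <;>
        simp [adjP5, Matrix.mulVec, dotProduct, Fin.sum_univ_five,
          Matrix.diagonal, Matrix.sub_apply]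
  · rintro a _ ⟨r, hr, h⟩
    have h0 := congrFun h 0
    have h1 := congrFun h 1
    simp [adjP5, Matrix.mulVec, dotProduct, Fin.sum_univ_five,
      Matrix.diagonal, Matrix.sub_apply] at h0 h1
    have := hr 2
    omega
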